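/- The element t_{12} ∈ t_{g,n} is central in the Lie subalgebra G generated by the elements v^1 + v^2 (v ∈ V) and v^k (v ∈ V, k ≥ 3). -/

import Mathlib

open scoped BigOperators

noncomputable section

/-- The symplectic vector space of dimension `2g`: pairs `(p, q)` of coordinate vectors. -/
abbrev SpV (g : ℕ) := (Fin g → ℂ) × (Fin g → ℂ)

/-- The standard symplectic form on `SpV g`, with `⟨x_a, y_b⟩ = δ_{ab}`. -/
def sympl (g : ℕ) (v w : SpV g) : ℂ := ∑ a : Fin g, (v.1 a * w.2 a - v.2 a * w.1 a)

/-- The basis vector `x_a` of the symplectic vector space. -/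
def bX (g : ℕ) (a : Fin g) : SpV g := (Pi.single a 1, 0)

/-- The basis vector `y_a` of the symplectic vector space. -/
def bY (g : ℕ) (a : Fin g) : SpV g := (0, Pi.single a 1)

/-- A realization of the generators and defining relations of the Lie algebra `t_{g,n}`
in a complex Lie algebra `L`: linear maps `v ↦ v^i` and elements `t_{ij}` satisfying
`[v^i, w^j] = ⟨v,w⟩ t_{ij}` for `i ≠ j`, `∑_a [x_a^i, y_a^i] = - ∑_{j ≠ i} t_{ij}`, and
`[v^i, t_{jk}] = 0` for `i, j, k` distinct. -/
structure TRel (g n : ℕ) (L : Type*) [LieRing L] [LieAlgebra ℂ L] where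
  ι : Fin n → SpV g →ₗ[ℂ] L
  t : Fin n → Fin n → L
  rel_pair : ∀ i j : Fin n, i ≠ j → ∀ v w : SpV g, ⁅ι i v, ι j w⁆ = sympl g v w • t i j
  rel_surf : ∀ i : Fin n,
    (∑ a : Fin g, ⁅ι i (bX g a), ι i (bY g a)⁆)
      = - ∑ j ∈ Finset.univ.filter (fun j => j ≠ i), t i j
  rel_cent : ∀ i j k : Fin n, i ≠ j → i ≠ k → j ≠ k → ∀ v : SpV g, ⁅ι i v, t j k⁆ = 0

/- ### Auxiliary lemmas -/

lemma sympl_bX {g : ℕ} (u : SpV g) (a : Fin g) : sympl g u (bX g a) = -u.2 a := by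
  simp [sympl, bX, Pi.single_apply, mul_comm]

lemma sympl_bY {g : ℕ} (u : SpV g) (a : Fin g) : sympl g u (bY g a) = u.1 a := by
  simp [sympl, bY, Pi.single_apply, mul_comm]

lemma sympl_bXY {g : ℕ} (a : Fin g) : sympl g (bX g a) (bY g a) = 1 := by
  simp [sympl, bX, bY, Pi.single_apply]

lemma sympl_bYX {g : ℕ} (a : Fin g) : sympl g (bY g a) (bX g a) = -1 := by
  simp [sympl, bX, bY, Pi.single_apply]

lemma decomp {g : ℕ} (u : SpV g) :
    (∑ a : Fin g, (u.1 a • bX g a + u.2 a • bY g a)) = u := by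
  ext b
  · simp [bX, bY, Prod.fst_sum, Finset.sum_apply, Pi.single_apply, mul_comm]
  · simp [bX, bY, Prod.snd_sum, Finset.sum_apply, Pi.single_apply, mul_comm]

/-- The centralizer of a single element, as a Lie subalgebra. -/
def cent {L : Type*} [LieRing L] [LieAlgebra ℂ L] (c : L) : LieSubalgebra ℂ L where
  carrier := {z | ⁅z, c⁆ = 0}
  add_mem' := by
    intro x y hx hy
    simp only [Set.mem_setOf_eq] at *
    rw [add_lie, hx, hy, add_zero]
  zero_mem' := zero_lie c
  smul_mem' := by
    intro a x hx
    simp only [Set.mem_setOf_eq] at *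
    rw [smul_lie, hx, smul_zero]
  lie_mem' := by
    intro x y hx hy
    simp only [Set.mem_setOf_eq] at *
    rw [lie_lie, hx, hy]
    simp

lemma mem_cent {L : Type*} [LieRing L] [LieAlgebra ℂ L] {c z : L} :
    z ∈ cent c ↔ ⁅z, c⁆ = 0 := Iff.rfl

lemma tsymm {g n : ℕ} {L : Type*} [LieRing L] [LieAlgebra ℂ L] (hg : 0 < g)
    (D : TRel g n L) (i j : Fin n) (hij : i ≠ j) : D.t j i = D.t i j := by
  have h1 := D.rel_pair i j hij (bX g ⟨0, hg⟩) (bY g ⟨0, hg⟩)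
  have h2 := D.rel_pair j i hij.symm (bY g ⟨0, hg⟩) (bX g ⟨0, hg⟩)
  rw [sympl_bXY] at h1
  rw [sympl_bYX] at h2
  have h3 := lie_skew (D.ι i (bX g ⟨0, hg⟩)) (D.ι j (bY g ⟨0, hg⟩))
  rw [h1, h2] at h3
  simpa using h3

lemma lie_sum' {L : Type*} [LieRing L] {α : Type*} (x : L) (s : Finset α) (f : α → L) :
    ⁅x, ∑ a ∈ s, f a⁆ = ∑ a ∈ s, ⁅x, f a⁆ := by
  classical
  induction s using Finset.induction_on with
  | empty => simp
  | insert _ _ h ih => rw [Finset.sum_insert h, Finset.sum_insert h, lie_add, ih]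

lemma key {g n : ℕ} {L : Type*} [LieRing L] [LieAlgebra ℂ L] (hn : 2 ≤ n) (D : TRel g n L)
    (hsym : D.t (⟨1, Nat.lt_of_lt_of_le Nat.one_lt_two hn⟩ : Fin n) ⟨0, Nat.lt_of_lt_of_le Nat.zero_lt_two hn⟩ = D.t ⟨0, Nat.lt_of_lt_of_le Nat.zero_lt_two hn⟩ ⟨1, Nat.lt_of_lt_of_le Nat.one_lt_two hn⟩)
    (u : SpV g) :
    ⁅D.ι ⟨0, Nat.lt_of_lt_of_le Nat.zero_lt_two hn⟩ u + D.ι ⟨1, Nat.lt_of_lt_of_le Nat.one_lt_two hn⟩ u, D.t ⟨0, Nat.lt_of_lt_of_le Nat.zero_lt_two hn⟩ ⟨1, Nat.lt_of_lt_of_le Nat.one_lt_two hn⟩⁆ = 0 := by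
  set i0 : Fin n := ⟨0, Nat.lt_of_lt_of_le Nat.zero_lt_two hn⟩ with hi0
  set i1 : Fin n := ⟨1, Nat.lt_of_lt_of_le Nat.one_lt_two hn⟩ with hi1
  set c := D.t i0 i1 with hc
  have h01 : i0 ≠ i1 := by simp [hi0, hi1, Fin.ext_iff]
  have hsum : ∀ (x : L) (f : Fin g → L), ⁅x, ∑ a : Fin g, f a⁆ = ∑ a : Fin g, ⁅x, f a⁆ :=
    fun x f => lie_sum' x Finset.univ f
  have hsum2 : ∀ (f : Fin g → L) (x : L), ⁅∑ a : Fin g, f a, x⁆ = ∑ a : Fin g, ⁅f a, x⁆ := by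
    intro f x
    rw [← lie_skew, hsum, ← Finset.sum_neg_distrib]
    exact Finset.sum_congr rfl fun a _ => lie_skew _ _
  have hA : ⁅D.ι i1 u, ∑ a : Fin g, ⁅D.ι i0 (bX g a), D.ι i0 (bY g a)⁆⁆ = -⁅D.ι i1 u, c⁆ := by
    rw [D.rel_surf i0, lie_neg, lie_sum', neg_inj]
    refine Finset.sum_eq_single_of_mem i1 (by simpa using h01.symm) ?_
    intro j hj hji1
    have hj0 : j ≠ i0 := (Finset.mem_filter.mp hj).2
    exact D.rel_cent i1 i0 j h01.symm (Ne.symm hji1) (Ne.symm hj0) u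
  have hB : ⁅D.ι i1 u, ∑ a : Fin g, ⁅D.ι i0 (bX g a), D.ι i0 (bY g a)⁆⁆ = ⁅D.ι i0 u, c⁆ := by
    rw [hsum]
    have hterm : ∀ a : Fin g, ⁅D.ι i1 u, ⁅D.ι i0 (bX g a), D.ι i0 (bY g a)⁆⁆
        = ⁅u.1 a • D.ι i0 (bX g a) + u.2 a • D.ι i0 (bY g a), c⁆ := by
      intro a
      rw [leibniz_lie, D.rel_pair i1 i0 h01.symm u (bX g a),
        D.rel_pair i1 i0 h01.symm u (bY g a), hsym, sympl_bX, sympl_bY]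
      have hsk : ⁅c, D.ι i0 (bY g a)⁆ = -⁅D.ι i0 (bY g a), c⁆ := (lie_skew _ _).symm
      rw [smul_lie, lie_smul, add_lie, smul_lie, smul_lie, hsk]
      rw [neg_smul, smul_neg, neg_neg]
      abel
    rw [Finset.sum_congr rfl (fun a _ => hterm a), ← hsum2]
    congr 1
    conv_rhs => rw [← decomp u]
    rw [map_sum]
    exact Finset.sum_congr rfl fun a _ => by rw [map_add, map_smul, map_smul]
  have h0 : ⁅D.ι i0 u, c⁆ = -⁅D.ι i1 u, c⁆ := by rw [← hB, hA]
  rw [add_lie, h0, neg_add_cancel]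

/-- The element `t_{12} ∈ t_{g,n}` is central in the Lie subalgebra `G`
generated by the elements `v^1 + v^2` (`v ∈ V`) and `v^k` (`v ∈ V`, `k ≥ 3`): every element
of `G` commutes with `t_{12}`. -/
theorem t12_central_in_G {g n : ℕ} (hn : 2 ≤ n) {L : Type*} [LieRing L] [LieAlgebra ℂ L]
    (D : TRel g n L) :
    ∀ z ∈ LieSubalgebra.lieSpan ℂ L
      ({z | ∃ v : SpV g, z = D.ι ⟨0, by omega⟩ v + D.ι ⟨1, by omega⟩ v} ∪
       {z | ∃ (v : SpV g) (k : Fin n),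
          k ≠ ⟨0, by omega⟩ ∧ k ≠ ⟨1, by omega⟩ ∧ z = D.ι k v}),
      ⁅z, D.t ⟨0, by omega⟩ ⟨1, by omega⟩⁆ = 0 := by
  set i0 : Fin n := ⟨0, by omega⟩ with hi0
  set i1 : Fin n := ⟨1, by omega⟩ with hi1
  have h01 : i0 ≠ i1 := by simp [hi0, hi1, Fin.ext_iff]
  have hle : LieSubalgebra.lieSpan ℂ L
      ({z | ∃ v : SpV g, z = D.ι i0 v + D.ι i1 v} ∪
       {z | ∃ (v : SpV g) (k : Fin n), k ≠ i0 ∧ k ≠ i1 ∧ z = D.ι k v})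
      ≤ cent (D.t i0 i1) := by
    rw [LieSubalgebra.lieSpan_le]
    rintro z (⟨v, rfl⟩ | ⟨v, k, hk0, hk1, rfl⟩)
    · rw [SetLike.mem_coe, mem_cent]
      rcases Nat.eq_zero_or_pos g with hg | hg
      · subst hg
        have hv : v = 0 := by
          ext b <;> exact b.elim0
        rw [hv]
        simp
      · exact key hn D (tsymm hg D i0 i1 h01) v
    · rw [SetLike.mem_coe, mem_cent]
      exact D.rel_cent k i0 i1 hk0 hk1 h01 v
  exact fun z hz => hle hz
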